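/- Let X have continuous density p with cdf P and Stein kernel τ(x) = (1/p(x)) ∫_{-∞}^x (E[X] − u) p(u) du. Then E[ K(x, X) ] = τ(x) where K(x,y) = P(x∧y)(1−P(x∨y))/(p(x)p(y)), and E[ R(x, X) ] = x − E[X] where R(x,y) = (P(y) − 𝟙[x ≤ y])/p(y). -/

import Mathlib

open Real MeasureTheory Set

private lemma fubA (p : ℝ → ℝ) (hmeas : Measurable p) (hnn : ∀ x, 0 ≤ p x)
    (hint : Integrable p) (hmean : Integrable (fun u => u * p u)) (x : ℝ) :
    ∫ y in Set.Iic x, (∫ u in Set.Iic y, p u) = ∫ u in Set.Iic x, (x - u) * p u := by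
  set f : ℝ → ℝ → ℝ := fun u y => if u ≤ y ∧ y ≤ x then p u else 0 with hf
  have hfm : AEStronglyMeasurable (Function.uncurry f) (volume.prod volume) := by
    have : Function.uncurry f = fun z : ℝ × ℝ =>
        if z ∈ {z : ℝ × ℝ | z.1 ≤ z.2 ∧ z.2 ≤ x} then p z.1 else 0 := rfl
    rw [this]
    exact (Measurable.ite ((measurableSet_le measurable_fst measurable_snd).inter
      (measurableSet_le measurable_snd measurable_const))
      (hmeas.comp measurable_fst) measurable_const).aestronglyMeasurable
  have hsec : ∀ u, (fun y => f u y) = (Set.Icc u x).indicator (fun _ => p u) := by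
    intro u; funext y; simp [hf, Set.indicator_apply, Set.mem_Icc]
  have hIy : ∀ u, (∫ y, f u y) = (Set.Iic x).indicator (fun u => (x - u) * p u) u := by
    intro u
    rw [hsec, integral_indicator_const _ measurableSet_Icc, measureReal_def, Real.volume_Icc]
    by_cases h : u ≤ x
    · rw [ENNReal.toReal_ofReal (by linarith), Set.indicator_of_mem (by exact h)]
      simp [mul_comm]
    · rw [Set.indicator_of_notMem (by exact h)]
      rw [ENNReal.ofReal_eq_zero.2 (by linarith)]
      simp
  have hIu : ∀ y, (∫ u, f u y) = (Set.Iic x).indicator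
      (fun y => ∫ u in Set.Iic y, p u) y := by
    intro y
    by_cases h : y ≤ x
    · have : (fun u => f u y) = (Set.Iic y).indicator p := by
        funext u; simp [hf, h, Set.indicator_apply, Set.mem_Iic]
      rw [this, integral_indicator measurableSet_Iic, Set.indicator_of_mem (by exact h)]
    · simp [hf, h]
  have hintx : Integrable (fun u => (x - u) * p u) := by
    have : (fun u => (x - u) * p u) = fun u => x * p u - u * p u := by
      funext u; ring
    rw [this]
    exact (hint.const_mul x).sub hmean
  have hint2 : Integrable (Function.uncurry f) (volume.prod volume) := by
    rw [integrable_prod_iff hfm]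
    constructor
    · refine Filter.Eventually.of_forall fun u => ?_
      have : (fun y => Function.uncurry f (u, y)) = (Set.Icc u x).indicator (fun _ => p u) :=
        hsec u
      rw [this]
      exact (integrable_indicator_iff measurableSet_Icc).2
        (integrableOn_const measure_Icc_lt_top.ne)
    · have : (fun u => ∫ y, ‖Function.uncurry f (u, y)‖) = fun u => ∫ y, f u y := by
        funext u
        refine integral_congr_ae (Filter.Eventually.of_forall fun y => ?_)
        simp only [Function.uncurry, hf]
        split <;> simp [abs_of_nonneg (hnn u)]
      rw [this]
      have : (fun u => ∫ y, f u y)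
          = (Set.Iic x).indicator (fun u => (x - u) * p u) := funext hIy
      rw [this]
      exact hintx.indicator measurableSet_Iic
  calc ∫ y in Set.Iic x, (∫ u in Set.Iic y, p u)
      = ∫ y, (Set.Iic x).indicator (fun y => ∫ u in Set.Iic y, p u) y :=
        (integral_indicator measurableSet_Iic).symm
    _ = ∫ y, ∫ u, f u y := integral_congr_ae
        (Filter.Eventually.of_forall fun y => (hIu y).symm)
    _ = ∫ u, ∫ y, f u y := (integral_integral_swap hint2).symm
    _ = ∫ u, (Set.Iic x).indicator (fun u => (x - u) * p u) u :=
        integral_congr_ae (Filter.Eventually.of_forall hIy)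
    _ = ∫ u in Set.Iic x, (x - u) * p u := integral_indicator measurableSet_Iic

private lemma fubB (p : ℝ → ℝ) (hmeas : Measurable p) (hnn : ∀ x, 0 ≤ p x)
    (hint : Integrable p) (hmean : Integrable (fun u => u * p u)) (x : ℝ) :
    ∫ y in Set.Ici x, (∫ u in Set.Ioi y, p u) = ∫ u in Set.Ioi x, (u - x) * p u := by
  set f : ℝ → ℝ → ℝ := fun u y => if x ≤ y ∧ y < u then p u else 0 with hf
  have hfm : AEStronglyMeasurable (Function.uncurry f) (volume.prod volume) := by
    have : Function.uncurry f = fun z : ℝ × ℝ =>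
        if z ∈ {z : ℝ × ℝ | x ≤ z.2 ∧ z.2 < z.1} then p z.1 else 0 := rfl
    rw [this]
    exact (Measurable.ite ((measurableSet_le measurable_const measurable_snd).inter
      (measurableSet_lt measurable_snd measurable_fst))
      (hmeas.comp measurable_fst) measurable_const).aestronglyMeasurable
  have hsec : ∀ u, (fun y => f u y) = (Set.Ico x u).indicator (fun _ => p u) := by
    intro u; funext y; simp [hf, Set.indicator_apply, Set.mem_Ico]
  have hIy : ∀ u, (∫ y, f u y) = (Set.Ioi x).indicator (fun u => (u - x) * p u) u := by
    intro u
    rw [hsec, integral_indicator_const _ measurableSet_Ico, measureReal_def, Real.volume_Ico]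
    by_cases h : x < u
    · rw [ENNReal.toReal_ofReal (by linarith), Set.indicator_of_mem (by exact h)]
      simp [mul_comm]
    · rw [Set.indicator_of_notMem (by exact h)]
      rw [ENNReal.ofReal_eq_zero.2 (by linarith)]
      simp
  have hIu : ∀ y, (∫ u, f u y) = (Set.Ici x).indicator
      (fun y => ∫ u in Set.Ioi y, p u) y := by
    intro y
    by_cases h : x ≤ y
    · have : (fun u => f u y) = (Set.Ioi y).indicator p := by
        funext u; simp [hf, h, Set.indicator_apply, Set.mem_Ioi]
      rw [this, integral_indicator measurableSet_Ioi, Set.indicator_of_mem (by exact h)]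
    · simp [hf, h]
  have hintx : Integrable (fun u => (u - x) * p u) := by
    have : (fun u => (u - x) * p u) = fun u => u * p u - x * p u := by
      funext u; ring
    rw [this]
    exact hmean.sub (hint.const_mul x)
  have hint2 : Integrable (Function.uncurry f) (volume.prod volume) := by
    rw [integrable_prod_iff hfm]
    constructor
    · refine Filter.Eventually.of_forall fun u => ?_
      have : (fun y => Function.uncurry f (u, y)) = (Set.Ico x u).indicator (fun _ => p u) :=
        hsec u
      rw [this]
      exact (integrable_indicator_iff measurableSet_Ico).2
        (integrableOn_const measure_Ico_lt_top.ne)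
    · have : (fun u => ∫ y, ‖Function.uncurry f (u, y)‖) = fun u => ∫ y, f u y := by
        funext u
        refine integral_congr_ae (Filter.Eventually.of_forall fun y => ?_)
        simp only [Function.uncurry, hf]
        split <;> simp [abs_of_nonneg (hnn u)]
      rw [this]
      have : (fun u => ∫ y, f u y)
          = (Set.Ioi x).indicator (fun u => (u - x) * p u) := funext hIy
      rw [this]
      exact hintx.indicator measurableSet_Ioi
  calc ∫ y in Set.Ici x, (∫ u in Set.Ioi y, p u)
      = ∫ y, (Set.Ici x).indicator (fun y => ∫ u in Set.Ioi y, p u) y :=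
        (integral_indicator measurableSet_Ici).symm
    _ = ∫ y, ∫ u, f u y := integral_congr_ae
        (Filter.Eventually.of_forall fun y => (hIu y).symm)
    _ = ∫ u, ∫ y, f u y := (integral_integral_swap hint2).symm
    _ = ∫ u, (Set.Ioi x).indicator (fun u => (u - x) * p u) u :=
        integral_congr_ae (Filter.Eventually.of_forall hIy)
    _ = ∫ u in Set.Ioi x, (u - x) * p u := integral_indicator measurableSet_Ioi

/-- Expectations of the kernels `K` and `R`: with
`K(x,y) = P(x∧y)(1-P(x∨y))/(p(x)p(y))` and `R(x,y) = (P(y) - 𝟙[x ≤ y])/p(y)`,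
one has `E[K(x,X)] = τ(x)` (the Stein kernel) and `E[R(x,X)] = x - E[X]`. -/
theorem stmt14 (p : ℝ → ℝ) (hmeas : Measurable p) (hnn : ∀ x, 0 ≤ p x)
    (hsupp : Convex ℝ (Function.support p))
    (hmass : ∫ x, p x = 1)
    (hmean : Integrable (fun u => u * p u))
    (hIK : ∀ x, Integrable (fun y =>
      ((∫ u in Set.Iic (min x y), p u) * (1 - ∫ u in Set.Iic (max x y), p u) /
        (p x * p y)) * p y))
    (hIR : ∀ x, Integrable (fun y =>
      (((∫ u in Set.Iic y, p u) - if x ≤ y then (1 : ℝ) else 0) / p y) * p y)) :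
    ∀ x ∈ Function.support p,
      (∫ y, ((∫ u in Set.Iic (min x y), p u) * (1 - ∫ u in Set.Iic (max x y), p u) /
          (p x * p y)) * p y
        = (p x)⁻¹ * ∫ u in Set.Iic x, ((∫ v, v * p v) - u) * p u) ∧
      (∫ y, (((∫ u in Set.Iic y, p u) - if x ≤ y then (1 : ℝ) else 0) / p y) * p y
        = x - ∫ v, v * p v) := by
  intro x hx
  rw [Function.mem_support] at hx
  have hint : Integrable p := by
    by_contra h
    rw [integral_undef h] at hmass
    norm_num at hmass
  set P : ℝ → ℝ := fun t => ∫ u in Set.Iic t, p u with hP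
  set μv : ℝ := ∫ v, v * p v with hμv
  -- total mass split
  have hPtot : ∀ t : ℝ, P t + ∫ u in Set.Ioi t, p u = 1 := fun t => by
    rw [hP]
    rw [intervalIntegral.integral_Iic_add_Ioi hint.integrableOn hint.integrableOn, hmass]
  -- support dichotomy
  have hdich : ∀ y, p y = 0 →
      (∀ u, p u ≠ 0 → u < y) ∨ (∀ u, p u ≠ 0 → y < u) := by
    intro y hy
    by_contra h
    push_neg at h
    obtain ⟨⟨a, ha, hay⟩, ⟨b, hb, hby⟩⟩ := h
    exact (hsupp.ordConnected.out (Function.mem_support.2 hb)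
      (Function.mem_support.2 ha) ⟨hby, hay⟩) hy
  have hP0 : ∀ y, (∀ u, p u ≠ 0 → y < u) → P y = 0 := by
    intro y h
    refine setIntegral_eq_zero_of_forall_eq_zero fun u hu => ?_
    by_contra hc
    exact absurd (h u hc) (not_lt.2 hu)
  have hP1 : ∀ y, (∀ u, p u ≠ 0 → u < y) → P y = 1 := by
    intro y h
    have h0 : (∫ u in Set.Ioi y, p u) = 0 := by
      refine setIntegral_eq_zero_of_forall_eq_zero fun u hu => ?_
      by_contra hc
      exact absurd (h u hc) (not_lt.2 (le_of_lt hu))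
    have := hPtot y
    linarith
  -- pointwise simplifications
  have hKpt : ∀ y, ((∫ u in Set.Iic (min x y), p u) *
      (1 - ∫ u in Set.Iic (max x y), p u) / (p x * p y)) * p y
      = (p x)⁻¹ * (P (min x y) * (1 - P (max x y))) := by
    intro y
    by_cases hy : p y = 0
    · have hz : P (min x y) * (1 - P (max x y)) = 0 := by
        rcases hdich y hy with h | h
        · have hxy : x < y := h x hx
          rw [max_eq_right hxy.le, hP1 y h]
          ring
        · have hxy : y < x := h x hx
          rw [min_eq_right hxy.le, hP0 y h]
          ring
      rw [hy, mul_zero, hz, mul_zero]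
    · rw [div_mul_eq_mul_div, mul_comm (p x) (p y), ← div_div,
        mul_div_assoc, div_self hy, mul_one, div_eq_inv_mul]
  have hRpt : ∀ y, (((∫ u in Set.Iic y, p u) - if x ≤ y then (1 : ℝ) else 0) / p y) * p y
      = P y - if x ≤ y then (1 : ℝ) else 0 := by
    intro y
    by_cases hy : p y = 0
    · have hz : P y - (if x ≤ y then (1 : ℝ) else 0) = 0 := by
        rcases hdich y hy with h | h
        · have hxy : x < y := h x hx
          rw [hP1 y h, if_pos hxy.le]; ring
        · have hxy : y < x := h x hx
          rw [hP0 y h, if_neg (by linarith)]; ring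
      rw [hy, mul_zero]
      exact hz.symm
    · exact div_mul_cancel₀ _ hy
  -- integrability of the simplified integrands
  have hFint : Integrable (fun y => P (min x y) * (1 - P (max x y))) := by
    have h1 : Integrable (fun y => (p x)⁻¹ * (P (min x y) * (1 - P (max x y)))) :=
      (hIK x).congr (Filter.Eventually.of_forall hKpt)
    have := h1.const_mul (p x)
    refine this.congr (Filter.Eventually.of_forall fun y => ?_)
    field_simp
  have hGint : Integrable (fun y => P y - if x ≤ y then (1 : ℝ) else 0) :=
    (hIR x).congr (Filter.Eventually.of_forall hRpt)
  -- key quantities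
  set A : ℝ := ∫ u in Set.Iic x, u * p u with hA
  set B : ℝ := ∫ u in Set.Ioi x, u * p u with hB
  have hABμ : A + B = μv := by
    rw [hA, hB, hμv]
    exact intervalIntegral.integral_Iic_add_Ioi hmean.integrableOn hmean.integrableOn
  have hPIoi : (∫ u in Set.Ioi x, p u) = 1 - P x := by
    have := hPtot x; linarith
  -- ∫_{Iic x} P = x * P x - A
  have hIicP : (∫ y in Set.Iic x, P y) = x * P x - A := by
    rw [hP]
    rw [fubA p hmeas hnn hint hmean x]
    have : (∫ u in Set.Iic x, (x - u) * p u)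
        = (∫ u in Set.Iic x, x * p u) - ∫ u in Set.Iic x, u * p u := by
      rw [← integral_sub ((hint.integrableOn).const_mul x) hmean.integrableOn]
      refine setIntegral_congr_fun measurableSet_Iic fun u _ => by ring
    rw [this, integral_const_mul]
  -- ∫_{Ici x} (1 - P) = B - x * (1 - P x)
  have hIciP : (∫ y in Set.Ici x, (1 - P y)) = B - x * (1 - P x) := by
    have h1 : (∫ y in Set.Ici x, (1 - P y)) = ∫ y in Set.Ici x, (∫ u in Set.Ioi y, p u) := by
      refine setIntegral_congr_fun measurableSet_Ici fun y _ => ?_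
      have := hPtot y; linarith
    rw [h1, fubB p hmeas hnn hint hmean x]
    have : (∫ u in Set.Ioi x, (u - x) * p u)
        = (∫ u in Set.Ioi x, u * p u) - ∫ u in Set.Ioi x, x * p u := by
      rw [← integral_sub hmean.integrableOn ((hint.integrableOn).const_mul x)]
      refine setIntegral_congr_fun measurableSet_Ioi fun u _ => by ring
    rw [this, integral_const_mul, hPIoi]
  -- RHS of the first claim
  have hRHS : (∫ u in Set.Iic x, (μv - u) * p u) = μv * P x - A := by
    have : (∫ u in Set.Iic x, (μv - u) * p u)
        = (∫ u in Set.Iic x, μv * p u) - ∫ u in Set.Iic x, u * p u := by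
      rw [← integral_sub ((hint.integrableOn).const_mul μv) hmean.integrableOn]
      refine setIntegral_congr_fun measurableSet_Iic fun u _ => by ring
    rw [this, integral_const_mul]
  constructor
  · -- first claim
    rw [integral_congr_ae (Filter.Eventually.of_forall hKpt), integral_const_mul]
    rw [show (∫ u in Set.Iic x, ((∫ v, v * p v) - u) * p u)
        = ∫ u in Set.Iic x, (μv - u) * p u from rfl, hRHS]
    congr 1
    -- split the integral at x
    have hsplit : (∫ y, P (min x y) * (1 - P (max x y)))
        = (∫ y in Set.Iic x, P (min x y) * (1 - P (max x y)))
          + ∫ y in Set.Ioi x, P (min x y) * (1 - P (max x y)) :=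
      (intervalIntegral.integral_Iic_add_Ioi hFint.integrableOn hFint.integrableOn).symm
    rw [hsplit]
    have h1 : (∫ y in Set.Iic x, P (min x y) * (1 - P (max x y)))
        = (1 - P x) * (x * P x - A) := by
      have : (∫ y in Set.Iic x, P (min x y) * (1 - P (max x y)))
          = ∫ y in Set.Iic x, (1 - P x) * P y := by
        refine setIntegral_congr_fun measurableSet_Iic fun y hy => ?_
        rw [min_eq_right hy, max_eq_left hy]; ring
      rw [this, integral_const_mul, hIicP]
    have h2 : (∫ y in Set.Ioi x, P (min x y) * (1 - P (max x y)))
        = P x * (B - x * (1 - P x)) := by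
      have : (∫ y in Set.Ioi x, P (min x y) * (1 - P (max x y)))
          = ∫ y in Set.Ioi x, P x * (1 - P y) := by
        refine setIntegral_congr_fun measurableSet_Ioi fun y hy => ?_
        rw [min_eq_left (le_of_lt hy), max_eq_right (le_of_lt hy)]
      rw [this, integral_const_mul, ← integral_Ici_eq_integral_Ioi, hIciP]
    rw [h1, h2]
    linear_combination (P x) * hABμ
  · -- second claim
    rw [integral_congr_ae (Filter.Eventually.of_forall hRpt)]
    have hsplit : (∫ y, (P y - if x ≤ y then (1 : ℝ) else 0))
        = (∫ y in Set.Iio x, (P y - if x ≤ y then (1 : ℝ) else 0))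
          + ∫ y in Set.Ici x, (P y - if x ≤ y then (1 : ℝ) else 0) :=
      (intervalIntegral.integral_Iio_add_Ici hGint.integrableOn hGint.integrableOn).symm
    rw [hsplit]
    have h1 : (∫ y in Set.Iio x, (P y - if x ≤ y then (1 : ℝ) else 0))
        = x * P x - A := by
      have : (∫ y in Set.Iio x, (P y - if x ≤ y then (1 : ℝ) else 0))
          = ∫ y in Set.Iio x, P y := by
        refine setIntegral_congr_fun measurableSet_Iio fun y hy => ?_
        rw [if_neg (not_le.2 hy)]; ring
      rw [this, ← integral_Iic_eq_integral_Iio, hIicP]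
    have h2 : (∫ y in Set.Ici x, (P y - if x ≤ y then (1 : ℝ) else 0))
        = -(B - x * (1 - P x)) := by
      have : (∫ y in Set.Ici x, (P y - if x ≤ y then (1 : ℝ) else 0))
          = ∫ y in Set.Ici x, -(1 - P y) := by
        refine setIntegral_congr_fun measurableSet_Ici fun y hy => ?_
        rw [if_pos (Set.mem_Ici.1 hy)]; ring
      rw [this, integral_neg, hIciP]
    rw [h1, h2]
    have := hABμ
    linarith
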